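/- Define α(x,y) = max(|x|^{1/3}, |y|). There exist positive constants c and C such that for all (x,y) ∈ ℝ₊², c √(α(x,y)) ≤ h(x,y) ≤ C √(α(x,y)), where h(x,y) = (2/9)^{1/6} (y/x^{1/6}) U(1/6, 4/3, 2y³/(9x)) for x,y ≥ 0 (with h interpreted by continuity on the boundary). -/

import Mathlib

open Real Filter Set Topology

set_option maxHeartbeats 1000000

private lemma eq_of_dense_aux {f g : ℝ × ℝ → ℝ} {s t : Set (ℝ × ℝ)}
    (hf : ContinuousOn f t) (hg : ContinuousOn g t) (hst : s ⊆ t)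
    (heq : Set.EqOn f g s) {z : ℝ × ℝ} (hzt : z ∈ t) (hzc : z ∈ closure s) :
    f z = g z := by
  have hne : (nhdsWithin z s).NeBot := mem_closure_iff_nhdsWithin_neBot.mp hzc
  have hf' : Filter.Tendsto f (nhdsWithin z s) (nhds (f z)) :=
    (hf z hzt).mono_left (nhdsWithin_mono z hst)
  have hg' : Filter.Tendsto g (nhdsWithin z s) (nhds (g z)) :=
    (hg z hzt).mono_left (nhdsWithin_mono z hst)
  have heq' : f =ᶠ[nhdsWithin z s] g := eventuallyEq_nhdsWithin_of_eqOn heq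
  exact tendsto_nhds_unique hf' (hg'.congr' heq'.symm)

theorem h_two_sided_sqrt_alpha_bounds (U : ℝ → ℝ)
    (hUcont : ContinuousOn U (Set.Ioi 0))
    (hUpos : ∀ s > (0 : ℝ), 0 < U s)
    (hUinf : Filter.Tendsto (fun s => U s * s ^ ((1 : ℝ) / 6)) Filter.atTop (nhds 1))
    (hUzero : Filter.Tendsto (fun s => U s * s ^ ((1 : ℝ) / 3))
      (nhdsWithin 0 (Set.Ioi 0)) (nhds (Real.Gamma (1 / 3) / Real.Gamma (1 / 6))))
    (h : ℝ → ℝ → ℝ)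
    (hcont : ContinuousOn (fun p : ℝ × ℝ => h p.1 p.2) (Set.Ici 0 ×ˢ Set.Ici 0))
    (hdef : ∀ x y : ℝ, 0 < x → 0 < y →
      h x y = (2 / 9 : ℝ) ^ ((1 : ℝ) / 6) * (y / x ^ ((1 : ℝ) / 6)) * U (2 * y ^ 3 / (9 * x))) :
    ∃ c > (0 : ℝ), ∃ C > (0 : ℝ), ∀ x y : ℝ, 0 ≤ x → 0 ≤ y →
      c * Real.sqrt (max (|x| ^ ((1 : ℝ) / 3)) |y|) ≤ h x y ∧
      h x y ≤ C * Real.sqrt (max (|x| ^ ((1 : ℝ) / 3)) |y|) := by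
  have hKpos : (0:ℝ) < Real.Gamma (1/3) / Real.Gamma (1/6) :=
    div_pos (Real.Gamma_pos_of_pos (by norm_num)) (Real.Gamma_pos_of_pos (by norm_num))
  set Q : Set (ℝ × ℝ) := Set.Ici 0 ×ˢ Set.Ici 0 with hQdef
  -- interior positivity
  have hint : ∀ x y : ℝ, 0 < x → 0 < y → 0 < h x y := by
    intro x y hx hy
    rw [hdef x y hx hy]
    have h1 : (0:ℝ) < (2/9 : ℝ) ^ ((1:ℝ)/6) := Real.rpow_pos_of_pos (by norm_num) _
    have h2 : (0:ℝ) < y / x ^ ((1:ℝ)/6) := div_pos hy (Real.rpow_pos_of_pos hx _)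
    have h3 : (0:ℝ) < U (2*y^3/(9*x)) := hUpos _ (by positivity)
    positivity
  -- scaling identity
  have hscale : ∀ l : ℝ, 0 < l → ∀ x y : ℝ, 0 ≤ x → 0 ≤ y →
      h (l^3 * x) (l * y) = Real.sqrt l * h x y := by
    intro l hl x y hx hy
    have hmapC : Continuous (fun p : ℝ × ℝ => ((l^3 * p.1, l * p.2) : ℝ × ℝ)) :=
      (continuous_const.mul continuous_fst).prodMk (continuous_const.mul continuous_snd)
    have hmaps : Set.MapsTo (fun p : ℝ × ℝ => ((l^3 * p.1, l * p.2) : ℝ × ℝ)) Q Q := by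
      rintro ⟨a, b⟩ ⟨ha, hb⟩
      exact ⟨mul_nonneg (by positivity : (0:ℝ) ≤ l^3) ha, mul_nonneg hl.le hb⟩
    have hf : ContinuousOn (fun p : ℝ × ℝ => h (l^3 * p.1) (l * p.2)) Q :=
      hcont.comp hmapC.continuousOn hmaps
    have hg : ContinuousOn (fun p : ℝ × ℝ => Real.sqrt l * h p.1 p.2) Q :=
      continuousOn_const.mul hcont
    have hsub : (Set.Ioi (0:ℝ) ×ˢ Set.Ioi (0:ℝ)) ⊆ Q :=
      Set.prod_mono Set.Ioi_subset_Ici_self Set.Ioi_subset_Ici_self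
    have heq : Set.EqOn (fun p : ℝ × ℝ => h (l^3 * p.1) (l * p.2))
        (fun p : ℝ × ℝ => Real.sqrt l * h p.1 p.2) (Set.Ioi 0 ×ˢ Set.Ioi 0) := by
      rintro ⟨a, b⟩ ⟨(ha : (0:ℝ) < a), (hb : (0:ℝ) < b)⟩
      have hla : 0 < l^3 * a := by positivity
      have hlb : 0 < l * b := by positivity
      simp only
      rw [hdef _ _ hla hlb, hdef _ _ ha hb]
      have e1 : (l^3 * a) ^ ((1:ℝ)/6) = l ^ ((1:ℝ)/2) * a ^ ((1:ℝ)/6) := by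
        rw [Real.mul_rpow (by positivity) ha.le, ← Real.rpow_natCast l 3,
          ← Real.rpow_mul hl.le]
        norm_num
      have e2 : 2 * (l*b)^3 / (9 * (l^3 * a)) = 2 * b^3 / (9 * a) := by
        field_simp
      rw [e1, e2, Real.sqrt_eq_rpow]
      have e3 : (l * b) / (l ^ ((1:ℝ)/2) * a ^ ((1:ℝ)/6))
          = l ^ ((1:ℝ)/2) * (b / a ^ ((1:ℝ)/6)) := by
        rw [← div_mul_div_comm]
        congr 1
        nth_rewrite 1 [← Real.rpow_one l]
        rw [← Real.rpow_sub hl]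
        norm_num
      rw [e3]
      ring
    have hclos : ((x, y) : ℝ × ℝ) ∈ closure (Set.Ioi (0:ℝ) ×ˢ Set.Ioi (0:ℝ)) := by
      rw [closure_prod_eq, closure_Ioi]
      exact ⟨hx, hy⟩
    exact eq_of_dense_aux hf hg hsub heq (z := (x, y)) ⟨hx, hy⟩ hclos
  -- limit value at (1,0)
  have hpath1 : Filter.Tendsto (fun y : ℝ => h 1 y) (nhdsWithin 0 (Set.Ioi 0))
      (nhds (h 1 0)) := by
    have hc : ContinuousWithinAt (fun p : ℝ × ℝ => h p.1 p.2) Q (1, 0) :=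
      hcont _ ⟨by norm_num, le_refl (0:ℝ)⟩
    have hm : Filter.Tendsto (fun y : ℝ => ((1:ℝ), y)) (nhdsWithin 0 (Set.Ioi 0))
        (nhdsWithin ((1:ℝ), (0:ℝ)) Q) := by
      apply tendsto_nhdsWithin_of_tendsto_nhds_of_eventually_within
      · exact ((Continuous.prodMk_right (1:ℝ)).tendsto 0).mono_left nhdsWithin_le_nhds
      · filter_upwards [self_mem_nhdsWithin] with y (hy : (0:ℝ) < y)
        exact ⟨by norm_num, hy.le⟩
    exact (hc.tendsto.comp hm : _)
  have hφ : Filter.Tendsto (fun y : ℝ => 2*y^3/9) (nhdsWithin 0 (Set.Ioi 0))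
      (nhdsWithin 0 (Set.Ioi 0)) := by
    apply tendsto_nhdsWithin_of_tendsto_nhds_of_eventually_within
    · have hcφ : Continuous (fun y : ℝ => 2*y^3/9) := by continuity
      have := (hcφ.tendsto 0).mono_left (nhdsWithin_le_nhds (s := Set.Ioi (0:ℝ)))
      simpa using this
    · filter_upwards [self_mem_nhdsWithin] with y (hy : (0:ℝ) < y)
      have : (0:ℝ) < 2*y^3/9 := by positivity
      exact this
  have hlim1 : Filter.Tendsto (fun y : ℝ => h 1 y) (nhdsWithin 0 (Set.Ioi 0))
      (nhds ((9/2:ℝ)^((1:ℝ)/6) * (Real.Gamma (1/3) / Real.Gamma (1/6)))) := by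
    have h0 := hUzero.comp hφ
    have h1 := h0.const_mul ((9/2:ℝ)^((1:ℝ)/6))
    apply h1.congr'
    filter_upwards [self_mem_nhdsWithin] with y (hy : (0:ℝ) < y)
    show (9/2:ℝ)^((1:ℝ)/6) * (U (2*y^3/9) * (2*y^3/9) ^ ((1:ℝ)/3)) = h 1 y
    rw [hdef 1 y one_pos hy]
    have e : ((2*y^3/9 : ℝ)) ^ ((1:ℝ)/3) = (2/9 : ℝ)^((1:ℝ)/3) * y := by
      rw [show (2*y^3/9 : ℝ) = (2/9) * y^3 by ring,
        Real.mul_rpow (by norm_num) (by positivity), ← Real.rpow_natCast y 3,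
        ← Real.rpow_mul hy.le]
      norm_num
    have e2 : (9/2:ℝ)^((1:ℝ)/6) * (2/9:ℝ)^((1:ℝ)/3) = (2/9:ℝ)^((1:ℝ)/6) := by
      rw [show (9/2:ℝ) = (2/9:ℝ)⁻¹ by norm_num, Real.inv_rpow (by norm_num),
        ← Real.rpow_neg (by norm_num), ← Real.rpow_add (by norm_num)]
      norm_num
    rw [e, Real.one_rpow, div_one, show (2:ℝ)*y^3/(9*1) = 2*y^3/9 by ring]
    linear_combination (U (2*y^3/9) * y) * e2
  have h10 : h 1 0 = (9/2:ℝ)^((1:ℝ)/6) * (Real.Gamma (1/3) / Real.Gamma (1/6)) :=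
    tendsto_nhds_unique hpath1 hlim1
  -- limit value at (0,1)
  have hpath2 : Filter.Tendsto (fun x : ℝ => h x 1) (nhdsWithin 0 (Set.Ioi 0))
      (nhds (h 0 1)) := by
    have hc : ContinuousWithinAt (fun p : ℝ × ℝ => h p.1 p.2) Q (0, 1) :=
      hcont _ ⟨le_refl (0:ℝ), by norm_num⟩
    have hm : Filter.Tendsto (fun x : ℝ => (x, (1:ℝ))) (nhdsWithin 0 (Set.Ioi 0))
        (nhdsWithin ((0:ℝ), (1:ℝ)) Q) := by
      apply tendsto_nhdsWithin_of_tendsto_nhds_of_eventually_within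
      · have hcm : Continuous (fun x : ℝ => (x, (1:ℝ))) := by continuity
        exact (hcm.tendsto 0).mono_left nhdsWithin_le_nhds
      · filter_upwards [self_mem_nhdsWithin] with x (hx : (0:ℝ) < x)
        exact ⟨hx.le, by norm_num⟩
    exact (hc.tendsto.comp hm : _)
  have hψ : Filter.Tendsto (fun x : ℝ => 2/(9*x)) (nhdsWithin 0 (Set.Ioi 0))
      Filter.atTop := by
    have h0 : Filter.Tendsto (fun x : ℝ => x⁻¹) (nhdsWithin 0 (Set.Ioi 0)) Filter.atTop :=
      tendsto_inv_nhdsGT_zero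
    have h1 := h0.const_mul_atTop (show (0:ℝ) < 2/9 by norm_num)
    apply h1.congr
    intro x
    simp [div_eq_mul_inv, mul_inv]
    ring
  have hlim2 : Filter.Tendsto (fun x : ℝ => h x 1) (nhdsWithin 0 (Set.Ioi 0)) (nhds 1) := by
    have h0 := hUinf.comp hψ
    apply h0.congr'
    filter_upwards [self_mem_nhdsWithin] with x (hx : (0:ℝ) < x)
    show U (2/(9*x)) * (2/(9*x)) ^ ((1:ℝ)/6) = h x 1
    rw [hdef x 1 hx one_pos]
    have e : ((2/(9*x) : ℝ)) ^ ((1:ℝ)/6) = (2/9:ℝ)^((1:ℝ)/6) / x^((1:ℝ)/6) := by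
      rw [show (2/(9*x):ℝ) = (2/9)/x by ring, Real.div_rpow (by norm_num) hx.le]
    rw [show (2:ℝ)*1^3/(9*x) = 2/(9*x) by ring, e]
    ring
  have h01 : h 0 1 = 1 := tendsto_nhds_unique hpath2 hlim2
  -- the compact set S where alpha = 1
  set S : Set (ℝ × ℝ) := ({(1:ℝ)} ×ˢ Set.Icc (0:ℝ) 1) ∪ (Set.Icc (0:ℝ) 1 ×ˢ {(1:ℝ)})
    with hSdef
  have hScomp : IsCompact S :=
    (isCompact_singleton.prod isCompact_Icc).union (isCompact_Icc.prod isCompact_singleton)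
  have hSQ : S ⊆ Q := by
    rintro ⟨a, b⟩ (⟨ha, hb⟩ | ⟨ha, hb⟩)
    · rw [Set.mem_singleton_iff] at ha
      exact ⟨by rw [ha]; norm_num, hb.1⟩
    · rw [Set.mem_singleton_iff] at hb
      exact ⟨ha.1, by rw [hb]; norm_num⟩
  have hSne : S.Nonempty := ⟨(1, 1), Or.inl ⟨rfl, zero_le_one, le_refl 1⟩⟩
  have hSpos : ∀ p ∈ S, 0 < h p.1 p.2 := by
    rintro ⟨a, b⟩ (⟨ha, hb⟩ | ⟨ha, hb⟩)
    · rw [Set.mem_singleton_iff] at ha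
      subst ha
      rcases eq_or_lt_of_le hb.1 with hb0 | hb0
      · rw [← hb0, h10]
        have : (0:ℝ) < (9/2:ℝ)^((1:ℝ)/6) := Real.rpow_pos_of_pos (by norm_num) _
        positivity
      · exact hint 1 b one_pos hb0
    · rw [Set.mem_singleton_iff] at hb
      subst hb
      rcases eq_or_lt_of_le ha.1 with ha0 | ha0
      · rw [← ha0, h01]; norm_num
      · exact hint a 1 ha0 one_pos
  obtain ⟨pmin, hpminS, hmin'⟩ := hScomp.exists_isMinOn hSne (hcont.mono hSQ)
  obtain ⟨pmax, hpmaxS, hmax'⟩ := hScomp.exists_isMaxOn hSne (hcont.mono hSQ)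
  have hmin : ∀ p ∈ S, h pmin.1 pmin.2 ≤ h p.1 p.2 := fun p hp => hmin' hp
  have hmax : ∀ p ∈ S, h p.1 p.2 ≤ h pmax.1 pmax.2 := fun p hp => hmax' hp
  refine ⟨h pmin.1 pmin.2, hSpos _ hpminS, h pmax.1 pmax.2, hSpos _ hpmaxS, ?_⟩
  intro x y hx hy
  by_cases hxy : x = 0 ∧ y = 0
  · obtain ⟨rfl, rfl⟩ := hxy
    have h00 : h 0 0 = 0 := by
      have hs := hscale 4 (by norm_num) 0 0 le_rfl le_rfl
      have h4 : Real.sqrt 4 = 2 := by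
        rw [show (4:ℝ) = 2^2 by norm_num, Real.sqrt_sq (by norm_num)]
      rw [mul_zero, mul_zero, h4] at hs
      linarith
    rw [h00]
    constructor <;> simp [Real.zero_rpow (show ((1:ℝ)/3) ≠ 0 by norm_num)]
  · set l : ℝ := max (x ^ ((1:ℝ)/3)) y with hldef
    have hl : 0 < l := by
      by_cases hx0 : x = 0
      · have hy0 : y ≠ 0 := fun hy0 => hxy ⟨hx0, hy0⟩
        exact lt_of_lt_of_le (lt_of_le_of_ne hy (Ne.symm hy0)) (le_max_right _ _)
      · have : (0:ℝ) < x := lt_of_le_of_ne hx (Ne.symm hx0)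
        exact lt_of_lt_of_le (Real.rpow_pos_of_pos this _) (le_max_left _ _)
    set x' : ℝ := x / l^3 with hx'def
    set y' : ℝ := y / l with hy'def
    have hx' : 0 ≤ x' := div_nonneg hx (by positivity)
    have hy' : 0 ≤ y' := div_nonneg hy hl.le
    have hx'c : x' ^ ((1:ℝ)/3) = x ^ ((1:ℝ)/3) / l := by
      rw [hx'def, Real.div_rpow hx (by positivity), ← Real.rpow_natCast l 3,
        ← Real.rpow_mul hl.le]
      norm_num
    have hmax1 : max (x' ^ ((1:ℝ)/3)) y' = 1 := by
      rw [hx'c, hy'def, max_div_div_right hl.le, ← hldef, div_self hl.ne']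
    have h1le : x' ^ ((1:ℝ)/3) ≤ 1 := le_of_le_of_eq (le_max_left _ _) hmax1
    have h2le : y' ≤ 1 := le_of_le_of_eq (le_max_right _ _) hmax1
    have hx'cube : x' = (x' ^ ((1:ℝ)/3)) ^ (3:ℝ) := by
      rw [← Real.rpow_mul hx']
      norm_num
    have hS' : ((x', y') : ℝ × ℝ) ∈ S := by
      rcases max_eq_iff.mp hmax1 with ⟨he, _⟩ | ⟨he, _⟩
      · have : x' = 1 := by rw [hx'cube, he, Real.one_rpow]
        exact Or.inl ⟨this, hy', h2le⟩
      · have hle : x' ≤ 1 := by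
          rw [hx'cube]
          exact Real.rpow_le_one (Real.rpow_nonneg hx' _) h1le (by norm_num)
        exact Or.inr ⟨⟨hx', hle⟩, he⟩
    have key : h x y = Real.sqrt l * h x' y' := by
      have hs := hscale l hl x' y' hx' hy'
      rw [hx'def, hy'def, show l^3 * (x / l^3) = x by field_simp,
        show l * (y / l) = y by field_simp] at hs
      exact hs
    have habs : max (|x| ^ ((1:ℝ)/3)) |y| = l := by
      rw [abs_of_nonneg hx, abs_of_nonneg hy]
    have hcm := hmin (x', y') hS'
    have hcM := hmax (x', y') hS'
    simp only at hcm hcM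
    rw [habs, key]
    constructor
    · rw [mul_comm (Real.sqrt l)]
      exact mul_le_mul_of_nonneg_right hcm (Real.sqrt_nonneg l)
    · rw [mul_comm (Real.sqrt l) (h x' y')]
      exact mul_le_mul_of_nonneg_right hcM (Real.sqrt_nonneg l)
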